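/- Fuzzy torus sequence that C⁰-converges but not C¹-converges: with H = h + h† (h the N×N cyclic shift) and θ̂ = diag(ℏ^s, 0,…,0) for fixed 0 < s ≤ 1, ℏ = sin(π/N): (1) ||θ̂|| = ℏ^s → 0; (2) the matrix A = (iℏ)^{-1}[θ̂, H] has eigenvalues ±i√2 ℏ^{s−1} and 0 (with multiplicity N−2), hence ||A|| = √2 ℏ^{s−1} does not tend to 0. -/

import Mathlib

open scoped BigOperators Topology Matrix

set_option maxHeartbeats 1000000
set_option synthInstance.maxHeartbeats 400000

/-- The operator norm of a complex `N × N` matrix (acting on `ℓ²`). -/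
noncomputable def opn {N : ℕ} (M : Matrix (Fin N) (Fin N) ℂ) : ℝ :=
  ‖(Matrix.toEuclideanCLM (𝕜 := ℂ) M :
      EuclideanSpace ℂ (Fin N) →L[ℂ] EuclideanSpace ℂ (Fin N))‖

/-- The cyclic shift matrix `h` with `h_{k,k+1} = 1`, `h_{N,1} = 1`. -/
def shift (N : ℕ) : Matrix (Fin N) (Fin N) ℂ :=
  Matrix.of fun k l => if (l : ℕ) = ((k : ℕ) + 1) % N then 1 else 0

/-- `θ̂ = diag(ℏ^s, 0, …, 0)` with `ℏ = sin(π/N)`. -/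
noncomputable def thetaHat (N : ℕ) (s : ℝ) : Matrix (Fin N) (Fin N) ℂ :=
  Matrix.of fun k l =>
    if k = (0 : ℕ) ∧ l = (0 : ℕ) then ((Real.sin (Real.pi / N) ^ s : ℝ) : ℂ) else 0

/-- `A = (iℏ)⁻¹ [θ̂, H]` with `H = h + h†`. -/
noncomputable def Amat (N : ℕ) (s : ℝ) : Matrix (Fin N) (Fin N) ℂ :=
  ((Complex.I * (Real.sin (Real.pi / N) : ℂ))⁻¹) •
    (thetaHat N s * (shift N + (shift N)ᴴ) -
      (shift N + (shift N)ᴴ) * thetaHat N s)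

namespace FuzzyAux

lemma clm_apply {N : ℕ} (M : Matrix (Fin N) (Fin N) ℂ) (v : EuclideanSpace ℂ (Fin N))
    (i : Fin N) : (Matrix.toEuclideanCLM (𝕜 := ℂ) M v) i = ∑ j, M i j * v j := rfl

lemma norm_of_three {N : ℕ} (x : EuclideanSpace ℂ (Fin N)) (p q r : Fin N) (A B C : ℝ)
    (hx : ∀ i, ‖x i‖ ^ 2 =
      (if i = p then A else 0) + (if i = q then B else 0) + (if i = r then C else 0)) :
    ‖x‖ = Real.sqrt (A + B + C) := by
  rw [EuclideanSpace.norm_eq]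
  congr 1
  rw [Finset.sum_congr rfl (fun i _ => hx i)]
  simp [Finset.sum_add_distrib]

lemma coord_le_norm {N : ℕ} (x : EuclideanSpace ℂ (Fin N)) (i : Fin N) : ‖x i‖ ≤ ‖x‖ := by
  rw [EuclideanSpace.norm_eq]
  have h : ‖x i‖ ^ 2 ≤ ∑ j, ‖x j‖ ^ 2 :=
    Finset.single_le_sum (f := fun j => ‖x j‖ ^ 2) (fun j _ => sq_nonneg _) (Finset.mem_univ i)
  calc ‖x i‖ = Real.sqrt (‖x i‖ ^ 2) := by rw [Real.sqrt_sq (norm_nonneg _)]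
    _ ≤ _ := Real.sqrt_le_sqrt h

lemma opn_theta (s : ℝ) (hs1 : 0 < s) (N : ℕ) (hN : 1 ≤ N) :
    opn (thetaHat N s) = Real.sin (Real.pi / N) ^ s := by
  haveI : NeZero N := ⟨by omega⟩
  set c : ℝ := Real.sin (Real.pi / N) ^ s with hc
  have hN1 : (1 : ℝ) ≤ (N : ℝ) := by exact_mod_cast hN
  have hsin : 0 ≤ Real.sin (Real.pi / N) :=
    Real.sin_nonneg_of_nonneg_of_le_pi (by positivity)
      (div_le_self Real.pi_nonneg hN1)
  have hc0 : 0 ≤ c := Real.rpow_nonneg hsin s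
  have hact : ∀ (v : EuclideanSpace ℂ (Fin N)),
      Matrix.toEuclideanCLM (𝕜 := ℂ) (thetaHat N s) v
        = EuclideanSpace.single (0 : Fin N) ((c : ℂ) * v 0) := by
    intro v
    ext i
    rw [clm_apply, EuclideanSpace.single_apply]
    rw [Finset.sum_eq_single (0 : Fin N)]
    · by_cases h : i = (0 : Fin N)
      · subst h; simp [thetaHat, hc]
      · have : (i : ℕ) ≠ 0 := Fin.val_ne_zero_iff.mpr h
        simp [thetaHat, this, h]
    · intro j _ hj
      have : (j : ℕ) ≠ 0 := Fin.val_ne_zero_iff.mpr hj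
      simp [thetaHat, this, hj]
    · simp
  refine le_antisymm (ContinuousLinearMap.opNorm_le_bound _ hc0 ?_) ?_
  · intro v
    rw [hact v, EuclideanSpace.norm_single, norm_mul, Complex.norm_real,
      Real.norm_of_nonneg hc0]
    exact mul_le_mul_of_nonneg_left (coord_le_norm v 0) hc0
  · have h := (Matrix.toEuclideanCLM (𝕜 := ℂ) (thetaHat N s)).le_opNorm
      (EuclideanSpace.single (0 : Fin N) (1 : ℂ))
    rw [hact, EuclideanSpace.norm_single, EuclideanSpace.norm_single] at h
    simpa [opn, Complex.norm_real, Real.norm_of_nonneg hc0, abs_of_nonneg hc0,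
      EuclideanSpace.single_apply] using h

lemma opn_A (s : ℝ) (N : ℕ) (hN : 3 ≤ N) :
    opn (Amat N s) = Real.sqrt 2 * Real.sin (Real.pi / N) ^ (s - 1) := by
  set ℏ : ℝ := Real.sin (Real.pi / N) with hℏ
  have hN1 : (1 : ℝ) < (N : ℝ) := by exact_mod_cast (by omega : 1 < N)
  have hpos : 0 < ℏ := Real.sin_pos_of_pos_of_lt_pi (by positivity)
    (div_lt_self Real.pi_pos hN1)
  set c : ℝ := ℏ ^ s with hcdef
  have hc0 : 0 ≤ c := Real.rpow_nonneg hpos.le s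
  set z0 : Fin N := ⟨0, by omega⟩ with hz0
  set j1 : Fin N := ⟨1, by omega⟩ with hj1
  set j2 : Fin N := ⟨N - 1, by omega⟩ with hj2
  have h01 : z0 ≠ j1 := by simp [hz0, hj1, Fin.ext_iff]
  have h02 : z0 ≠ j2 := by simp [hz0, hj2, Fin.ext_iff]; omega
  have h12 : j1 ≠ j2 := by simp [hj1, hj2, Fin.ext_iff]; omega
  set H : Matrix (Fin N) (Fin N) ℂ := shift N + (shift N)ᴴ with hHdef
  -- entries of H in row/column z0
  have hH0l : ∀ l, H z0 l = (if l = j1 then 1 else 0) + (if l = j2 then 1 else 0) := by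
    intro l
    have h1 : (1 : ℕ) % N = 1 := Nat.mod_eq_of_lt (by omega)
    have h2 : ((0 : ℕ) = ((l : ℕ) + 1) % N) ↔ (l : ℕ) = N - 1 := by
      rw [eq_comm]
      rcases Nat.lt_or_ge ((l : ℕ) + 1) N with h | h
      · rw [Nat.mod_eq_of_lt h]; omega
      · have hl := l.isLt
        have h' : (l : ℕ) + 1 = N := by omega
        simp [h', Nat.mod_self]; omega
    simp only [hHdef, Matrix.add_apply, Matrix.conjTranspose_apply, shift, Matrix.of_apply]
    rw [apply_ite (star : ℂ → ℂ)]
    simp only [star_one, star_zero]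
    congr 1
    · simp only [hz0, hj1, Fin.ext_iff]; simp [h1]
    · simp only [hz0, hj2, Fin.ext_iff]; simp [h2]
  have hHk0 : ∀ k, H k z0 = (if k = j1 then 1 else 0) + (if k = j2 then 1 else 0) := by
    intro k
    have h1 : (1 : ℕ) % N = 1 := Nat.mod_eq_of_lt (by omega)
    have h2 : ((0 : ℕ) = ((k : ℕ) + 1) % N) ↔ (k : ℕ) = N - 1 := by
      rw [eq_comm]
      rcases Nat.lt_or_ge ((k : ℕ) + 1) N with h | h
      · rw [Nat.mod_eq_of_lt h]; omega
      · have hl := k.isLt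
        have h' : (k : ℕ) + 1 = N := by omega
        simp [h', Nat.mod_self]; omega
    simp only [hHdef, Matrix.add_apply, Matrix.conjTranspose_apply, shift, Matrix.of_apply]
    rw [apply_ite (star : ℂ → ℂ)]
    simp only [star_one, star_zero]
    rw [add_comm]
    congr 1
    · simp only [hz0, hj1, Fin.ext_iff]; simp [h1]
    · simp only [hz0, hj2, Fin.ext_iff]; simp [h2]
  set Cm : Matrix (Fin N) (Fin N) ℂ := thetaHat N s * H - H * thetaHat N s with hCmdef
  -- products with thetaHat
  have hθB : ∀ (B : Matrix (Fin N) (Fin N) ℂ) (k l : Fin N),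
      (thetaHat N s * B) k l = if k = z0 then (c : ℂ) * B z0 l else 0 := by
    intro B k l
    rw [Matrix.mul_apply, Finset.sum_eq_single z0]
    · by_cases h : k = z0
      · subst h; simp [thetaHat, hz0, hcdef, hℏ]
      · have h' : (k : ℕ) ≠ 0 := by simpa [Fin.ext_iff, hz0] using h
        simp [thetaHat, h', h]
    · intro j _ hj
      have h' : (j : ℕ) ≠ 0 := by simpa [Fin.ext_iff, hz0] using hj
      simp [thetaHat, h']
    · simp
  have hBθ : ∀ (B : Matrix (Fin N) (Fin N) ℂ) (k l : Fin N),
      (B * thetaHat N s) k l = if l = z0 then B k z0 * (c : ℂ) else 0 := by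
    intro B k l
    rw [Matrix.mul_apply, Finset.sum_eq_single z0]
    · by_cases h : l = z0
      · subst h; simp [thetaHat, hz0, hcdef, hℏ]
      · have h' : (l : ℕ) ≠ 0 := by simpa [Fin.ext_iff, hz0] using h
        simp [thetaHat, h', h]
    · intro j _ hj
      have h' : (j : ℕ) ≠ 0 := by simpa [Fin.ext_iff, hz0] using hj
      simp [thetaHat, h']
    · simp
  -- action of Cm
  have hact : ∀ (v : EuclideanSpace ℂ (Fin N)) (i : Fin N),
      (Matrix.toEuclideanCLM (𝕜 := ℂ) Cm v) i =
        (if i = z0 then (c : ℂ) * (v j1 + v j2) else 0)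
          - ((if i = j1 then 1 else 0) + (if i = j2 then 1 else 0)) * ((c : ℂ) * v z0) := by
    intro v i
    rw [clm_apply]
    have hsplit : ∀ j : Fin N, Cm i j * v j =
        (if i = z0 then (c : ℂ) * (H z0 j * v j) else 0)
          - (if j = z0 then H i z0 * ((c : ℂ) * v z0) else 0) := by
      intro j
      rw [hCmdef]
      simp only [Matrix.sub_apply, hθB, hBθ, sub_mul]
      congr 1
      · by_cases h : i = z0 <;> simp [h, mul_assoc]
      · by_cases h : j = z0
        · subst h; simp; ring
        · simp [h]
    rw [Finset.sum_congr rfl fun j _ => hsplit j, Finset.sum_sub_distrib]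
    congr 1
    · by_cases h : i = z0
      · subst h
        simp only [eq_self_iff_true, if_true]
        rw [← Finset.mul_sum]
        congr 1
        rw [Finset.sum_congr rfl fun j _ => by rw [hH0l j]]
        simp [add_mul, Finset.sum_add_distrib]
      · simp [h]
    · rw [Finset.sum_ite_eq' Finset.univ z0 (fun _ => H i z0 * ((c : ℂ) * v z0))]
      simp [hHk0 i]
  -- pointwise squared norms
  have hptsq : ∀ (v : EuclideanSpace ℂ (Fin N)) (i : Fin N),
      ‖(Matrix.toEuclideanCLM (𝕜 := ℂ) Cm v) i‖ ^ 2 =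
        (if i = z0 then ‖(c : ℂ) * (v j1 + v j2)‖ ^ 2 else 0)
        + (if i = j1 then ‖(c : ℂ) * v z0‖ ^ 2 else 0)
        + (if i = j2 then ‖(c : ℂ) * v z0‖ ^ 2 else 0) := by
    intro v i
    rw [hact v i]
    by_cases h0 : i = z0
    · subst h0; simp [h01, h02]
    · by_cases hone : i = j1
      · subst hone; simp [Ne.symm h01, h12]
      · by_cases htwo : i = j2
        · subst htwo; simp [Ne.symm h02, Ne.symm h12]
        · simp [h0, hone, htwo]
  have hnorm : ∀ v : EuclideanSpace ℂ (Fin N),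
      ‖Matrix.toEuclideanCLM (𝕜 := ℂ) Cm v‖ =
        Real.sqrt (‖(c : ℂ) * (v j1 + v j2)‖ ^ 2 + ‖(c : ℂ) * v z0‖ ^ 2
          + ‖(c : ℂ) * v z0‖ ^ 2) :=
    fun v => norm_of_three _ z0 j1 j2 _ _ _ (hptsq v)
  -- norm of Cm
  have hCnorm : opn Cm = Real.sqrt 2 * c := by
    refine le_antisymm (ContinuousLinearMap.opNorm_le_bound _ (by positivity) ?_) ?_
    · intro v
      rw [hnorm v]
      have h3 : ‖v z0‖ ^ 2 + (‖v j1‖ ^ 2 + ‖v j2‖ ^ 2) ≤ ‖v‖ ^ 2 := by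
        have hsum := Finset.sum_le_sum_of_subset_of_nonneg
          (Finset.subset_univ ({z0, j1, j2} : Finset (Fin N)))
          (fun i _ _ => sq_nonneg ‖v i‖)
        rw [Finset.sum_insert (by simp [h01, h02]), Finset.sum_pair h12] at hsum
        rw [EuclideanSpace.norm_eq, Real.sq_sqrt (Finset.sum_nonneg fun i _ => sq_nonneg _)]
        exact hsum
      have ha : ‖(c : ℂ) * (v j1 + v j2)‖ ≤ c * (‖v j1‖ + ‖v j2‖) := by
        rw [norm_mul, Complex.norm_real, Real.norm_of_nonneg hc0]
        exact mul_le_mul_of_nonneg_left (norm_add_le _ _) hc0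
      have hb : ‖(c : ℂ) * v z0‖ = c * ‖v z0‖ := by
        rw [norm_mul, Complex.norm_real, Real.norm_of_nonneg hc0]
      have key : ‖(c : ℂ) * (v j1 + v j2)‖ ^ 2 + ‖(c : ℂ) * v z0‖ ^ 2
          + ‖(c : ℂ) * v z0‖ ^ 2 ≤ (Real.sqrt 2 * c * ‖v‖) ^ 2 := by
        have h2 : (Real.sqrt 2) ^ 2 = 2 := Real.sq_sqrt (by norm_num)
        have hA2 : ‖(c : ℂ) * (v j1 + v j2)‖ ^ 2 ≤ (c * (‖v j1‖ + ‖v j2‖)) ^ 2 :=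
          pow_le_pow_left₀ (norm_nonneg _) ha 2
        rw [hb]
        nlinarith [hA2, mul_le_mul_of_nonneg_left h3 (sq_nonneg c),
          sq_nonneg (c * (‖v j1‖ - ‖v j2‖)), h2, hc0, norm_nonneg v]
      calc Real.sqrt _ ≤ Real.sqrt ((Real.sqrt 2 * c * ‖v‖) ^ 2) := Real.sqrt_le_sqrt key
        _ = Real.sqrt 2 * c * ‖v‖ := Real.sqrt_sq (by positivity)
    · set w : EuclideanSpace ℂ (Fin N) :=
        EuclideanSpace.single j1 (1 : ℂ) + EuclideanSpace.single j2 (1 : ℂ) with hw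
      have hwj1 : w j1 = 1 := by
        simp [hw, EuclideanSpace.single_apply, h12, Ne.symm h12]
      have hwj2 : w j2 = 1 := by
        simp [hw, EuclideanSpace.single_apply, h12, Ne.symm h12]
      have hwz0 : w z0 = 0 := by
        simp [hw, EuclideanSpace.single_apply, h01, h02]
      have hwn : ‖w‖ = Real.sqrt 2 := by
        have := norm_of_three w z0 j1 j2 0 1 1 ?_
        · rw [this]; norm_num
        · intro i
          by_cases h0 : i = z0
          · subst h0; simp [hwz0, h01, h02]
          · by_cases hone : i = j1
            · subst hone; simp [hwj1, Ne.symm h01, h12]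
            · by_cases htwo : i = j2
              · subst htwo; simp [hwj2, Ne.symm h02, Ne.symm h12]
              · have : w i = 0 := by
                  simp [hw, EuclideanSpace.single_apply, hone, htwo]
                simp [this, h0, hone, htwo]
      have hTw : ‖Matrix.toEuclideanCLM (𝕜 := ℂ) Cm w‖ = 2 * c := by
        rw [hnorm w, hwj1, hwj2, hwz0]
        norm_num
        rw [abs_of_nonneg hc0]
        ring
      have hle := (Matrix.toEuclideanCLM (𝕜 := ℂ) Cm).le_opNorm w
      rw [hTw, hwn] at hle
      have hs2 : Real.sqrt 2 > 0 := by positivity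
      have h2 : Real.sqrt 2 * Real.sqrt 2 = 2 := Real.mul_self_sqrt (by norm_num)
      show Real.sqrt 2 * c ≤ ‖(Matrix.toEuclideanCLM (𝕜 := ℂ) Cm :
        EuclideanSpace ℂ (Fin N) →L[ℂ] EuclideanSpace ℂ (Fin N))‖
      nlinarith [hle, hs2, hc0, h2]
  -- conclude
  have hAeq : Amat N s = ((Complex.I * (ℏ : ℂ))⁻¹) • Cm := by
    rw [hCmdef, hHdef, hℏ]; rfl
  have hmap : Matrix.toEuclideanCLM (𝕜 := ℂ) (((Complex.I * (ℏ : ℂ))⁻¹) • Cm)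
      = ((Complex.I * (ℏ : ℂ))⁻¹) • Matrix.toEuclideanCLM (𝕜 := ℂ) Cm :=
    map_smul _ _ _
  have hsmul : opn (Amat N s) = ‖(Complex.I * (ℏ : ℂ))⁻¹‖ * opn Cm := by
    unfold opn
    rw [hAeq, hmap]
    exact norm_smul ((Complex.I * (ℏ : ℂ))⁻¹)
      (Matrix.toEuclideanCLM (𝕜 := ℂ) Cm :
        EuclideanSpace ℂ (Fin N) →L[ℂ] EuclideanSpace ℂ (Fin N))
  have hz : ‖(Complex.I * (ℏ : ℂ))⁻¹‖ = ℏ⁻¹ := by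
    rw [norm_inv, norm_mul, Complex.norm_I, Complex.norm_real,
      Real.norm_of_nonneg hpos.le, one_mul]
  rw [hsmul, hz, hCnorm, Real.rpow_sub_one hpos.ne' s, ← hcdef]
  rw [div_eq_mul_inv]; ring

end FuzzyAux

theorem fuzzy_torus_C0_not_C1_sequence (s : ℝ) (hs1 : 0 < s) (hs2 : s ≤ 1) :
    (∀ N : ℕ, 1 ≤ N →
      opn (thetaHat N s) = Real.sin (Real.pi / N) ^ s) ∧
    Filter.Tendsto (fun N : ℕ => opn (thetaHat N s)) Filter.atTop (𝓝 0) ∧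
    (∀ N : ℕ, 3 ≤ N →
      opn (Amat N s) = Real.sqrt 2 * Real.sin (Real.pi / N) ^ (s - 1)) ∧
    ¬ Filter.Tendsto (fun N : ℕ => opn (Amat N s)) Filter.atTop (𝓝 0) := by
  refine ⟨fun N hN => FuzzyAux.opn_theta s hs1 N hN, ?_, fun N hN => FuzzyAux.opn_A s N hN, ?_⟩
  · -- C⁰ convergence
    have h1 : Filter.Tendsto (fun N : ℕ => Real.pi / N) Filter.atTop (𝓝 0) :=
      tendsto_const_div_atTop_nhds_zero_nat Real.pi
    have h2 : Filter.Tendsto (fun N : ℕ => Real.sin (Real.pi / N)) Filter.atTop (𝓝 0) := by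
      have := (Real.continuous_sin.tendsto 0).comp h1
      simpa [Function.comp_def] using this
    have h3 : Filter.Tendsto (fun N : ℕ => Real.sin (Real.pi / N) ^ s)
        Filter.atTop (𝓝 0) := by
      have := h2.rpow_const (p := s) (Or.inr hs1.le)
      rwa [Real.zero_rpow hs1.ne'] at this
    refine h3.congr' ?_
    filter_upwards [Filter.eventually_ge_atTop 1] with N hN
    exact (FuzzyAux.opn_theta s hs1 N hN).symm
  · -- no C¹ convergence
    intro hT
    have hev := hT.eventually (gt_mem_nhds (by norm_num : (0 : ℝ) < 1))
    rw [Filter.eventually_atTop] at hev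
    obtain ⟨M, hM⟩ := hev
    set N := max M 3 with hNdef
    have hN3 : 3 ≤ N := le_max_right _ _
    have hlt := hM N (le_max_left _ _)
    rw [FuzzyAux.opn_A s N hN3] at hlt
    -- but √2 * ℏ^(s-1) ≥ √2 > 1
    have hN1 : (1 : ℝ) < (N : ℝ) := by
      have : 1 < N := by omega
      exact_mod_cast this
    have hpos : 0 < Real.sin (Real.pi / N) :=
      Real.sin_pos_of_pos_of_lt_pi (by positivity) (div_lt_self Real.pi_pos hN1)
    have hle1 : Real.sin (Real.pi / N) ≤ 1 := Real.sin_le_one _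
    have hge1 : 1 ≤ Real.sin (Real.pi / N) ^ (s - 1) :=
      Real.one_le_rpow_of_pos_of_le_one_of_nonpos hpos hle1 (by linarith)
    have hsq : (1 : ℝ) < Real.sqrt 2 := by
      rw [show (1 : ℝ) = Real.sqrt 1 from (Real.sqrt_one).symm]
      exact Real.sqrt_lt_sqrt (by norm_num) (by norm_num)
    nlinarith [hlt, hge1, hsq]
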